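/- If A belongs to the Schatten class S_p and B belongs to the Schatten class S_q on a Hilbert space H, with 1/r = 1/p + 1/q for 0 < p, q, r < ∞, then the composition AB belongs to the Schatten class S_r. -/
import Mathlib


open scoped BigOperators

/-- The `k`-th singular value (approximation number) of a bounded operator `T`
on a Hilbert space: the distance from `T` to operators of rank at most `k`.
For compact operators this is the sequence of eigenvalues of `(T*T)^{1/2}`
arranged non-increasingly with multiplicity. -/
noncomputable def singularValue {H : Type*} [NormedAddCommGroup H] [InnerProductSpace ℂ H]
    (T : H →L[ℂ] H) (k : ℕ) : ℝ :=
  sInf ((fun F : H →L[ℂ] H => ‖T - F‖) ''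
    {F | FiniteDimensional ℂ (LinearMap.range F.toLinearMap) ∧
      Module.finrank ℂ (LinearMap.range F.toLinearMap) ≤ k})

/-- Membership in the Schatten class `S_p`: the singular values are `p`-summable. -/
def MemSchatten {H : Type*} [NormedAddCommGroup H] [InnerProductSpace ℂ H]
    (p : ℝ) (T : H →L[ℂ] H) : Prop :=
  Summable fun k => (singularValue T k) ^ p

section Aux

variable {H : Type*} [NormedAddCommGroup H] [InnerProductSpace ℂ H]

/-- The approximation set is nonempty (it contains `0`). -/
lemma singularValue_set_nonempty (T : H →L[ℂ] H) (k : ℕ) :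
    ((fun F : H →L[ℂ] H => ‖T - F‖) ''
      {F | FiniteDimensional ℂ (LinearMap.range F.toLinearMap) ∧
        Module.finrank ℂ (LinearMap.range F.toLinearMap) ≤ k}).Nonempty := by
  refine ⟨‖T - 0‖, ⟨0, ?_, rfl⟩⟩
  have h0 : LinearMap.range ((0 : H →L[ℂ] H) : H →ₗ[ℂ] H) = ⊥ := LinearMap.range_zero
  refine ⟨?_, ?_⟩
  · show FiniteDimensional ℂ (LinearMap.range ((0 : H →L[ℂ] H) : H →ₗ[ℂ] H))
    rw [h0]; infer_instance
  · show Module.finrank ℂ (LinearMap.range ((0 : H →L[ℂ] H) : H →ₗ[ℂ] H)) ≤ k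
    rw [h0]; simp

lemma singularValue_set_bddBelow (T : H →L[ℂ] H) (k : ℕ) :
    BddBelow ((fun F : H →L[ℂ] H => ‖T - F‖) ''
      {F | FiniteDimensional ℂ (LinearMap.range F.toLinearMap) ∧
        Module.finrank ℂ (LinearMap.range F.toLinearMap) ≤ k}) := by
  refine ⟨0, fun x hx => ?_⟩
  rcases hx with ⟨F, _, rfl⟩
  exact norm_nonneg _

lemma singularValue_nonneg (T : H →L[ℂ] H) (k : ℕ) : 0 ≤ singularValue T k :=
  le_csInf (singularValue_set_nonempty T k) (by rintro x ⟨F, _, rfl⟩; exact norm_nonneg _)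

lemma singularValue_antitone (T : H →L[ℂ] H) : Antitone (singularValue T) := by
  intro k l hkl
  refine csInf_le_csInf (singularValue_set_bddBelow T l)
    (singularValue_set_nonempty T k) ?_
  rintro x ⟨F, ⟨h1, h2⟩, rfl⟩
  exact ⟨F, ⟨h1, h2.trans hkl⟩, rfl⟩

lemma singularValue_le (T F : H →L[ℂ] H) (k : ℕ)
    (h1 : FiniteDimensional ℂ (LinearMap.range F.toLinearMap))
    (h2 : Module.finrank ℂ (LinearMap.range F.toLinearMap) ≤ k) :
    singularValue T k ≤ ‖T - F‖ :=
  csInf_le (singularValue_set_bddBelow T k) ⟨F, ⟨h1, h2⟩, rfl⟩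

/-- The key submultiplicativity of approximation numbers. -/
lemma singularValue_comp_le (A B : H →L[ℂ] H) (m n : ℕ) :
    singularValue (A ∘L B) (m + n) ≤ singularValue A m * singularValue B n := by
  set a := singularValue A m with ha
  set b := singularValue B n with hb
  have ha0 : 0 ≤ a := singularValue_nonneg A m
  have hb0 : 0 ≤ b := singularValue_nonneg B n
  -- for every ε > 0, singularValue (A ∘L B) (m+n) ≤ (a + ε) * (b + ε)
  have key : ∀ ε : ℝ, 0 < ε → singularValue (A ∘L B) (m + n) ≤ (a + ε) * (b + ε) := by
    intro ε hε
    -- choose F approximating A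
    have hFlt : sInf ((fun F : H →L[ℂ] H => ‖A - F‖) ''
        {F | FiniteDimensional ℂ (LinearMap.range F.toLinearMap) ∧
          Module.finrank ℂ (LinearMap.range F.toLinearMap) ≤ m}) < a + ε := by
      have : singularValue A m < a + ε := by rw [← ha]; linarith
      rw [singularValue] at this; exact this
    obtain ⟨x, hxmem, hxlt⟩ := exists_lt_of_csInf_lt (singularValue_set_nonempty A m) hFlt
    obtain ⟨F, ⟨hF1, hF2⟩, rfl⟩ := hxmem
    have hGlt : sInf ((fun G : H →L[ℂ] H => ‖B - G‖) ''
        {G | FiniteDimensional ℂ (LinearMap.range G.toLinearMap) ∧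
          Module.finrank ℂ (LinearMap.range G.toLinearMap) ≤ n}) < b + ε := by
      have : singularValue B n < b + ε := by rw [← hb]; linarith
      rw [singularValue] at this; exact this
    obtain ⟨y, hymem, hylt⟩ := exists_lt_of_csInf_lt (singularValue_set_nonempty B n) hGlt
    obtain ⟨G, ⟨hG1, hG2⟩, rfl⟩ := hymem
    -- candidate finite-rank approximant of A ∘L B
    set C : H →L[ℂ] H := F ∘L B + (A - F) ∘L G with hC
    have hrange : LinearMap.range C.toLinearMap ≤
        LinearMap.range F.toLinearMap ⊔
          Submodule.map (A - F).toLinearMap (LinearMap.range G.toLinearMap) := by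
      rintro x ⟨v, rfl⟩
      refine Submodule.mem_sup.2 ⟨F (B v), ⟨B v, rfl⟩, (A - F) (G v), ⟨G v, ⟨v, rfl⟩, rfl⟩, ?_⟩
      simp [hC]
    haveI : FiniteDimensional ℂ
        (Submodule.map (A - F).toLinearMap (LinearMap.range G.toLinearMap)) :=
      Module.Finite.map _ _
    haveI : FiniteDimensional ℂ
        (LinearMap.range F.toLinearMap ⊔
          Submodule.map (A - F).toLinearMap (LinearMap.range G.toLinearMap) :
          Submodule ℂ H) :=
      Submodule.finiteDimensional_sup _ _
    haveI hCfin : FiniteDimensional ℂ (LinearMap.range C.toLinearMap) :=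
      Submodule.finiteDimensional_of_le hrange
    have hCrank : Module.finrank ℂ (LinearMap.range C.toLinearMap) ≤ m + n := by
      calc Module.finrank ℂ (LinearMap.range C.toLinearMap)
          ≤ Module.finrank ℂ
            (LinearMap.range F.toLinearMap ⊔
              Submodule.map (A - F).toLinearMap (LinearMap.range G.toLinearMap) :
              Submodule ℂ H) := Submodule.finrank_mono hrange
        _ ≤ Module.finrank ℂ (LinearMap.range F.toLinearMap) +
            Module.finrank ℂ
              (Submodule.map (A - F).toLinearMap (LinearMap.range G.toLinearMap)) :=
          Submodule.finrank_add_le_finrank_add_finrank _ _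
        _ ≤ m + n := by
          refine add_le_add (le_trans le_rfl hF2) ?_
          exact le_trans (Submodule.finrank_map_le _ _) hG2
    have hfactor : A ∘L B - C = (A - F) ∘L (B - G) := by
      ext v
      simp [hC, ContinuousLinearMap.comp_apply, sub_smul]
      abel
    have hnorm : ‖A ∘L B - C‖ ≤ ‖A - F‖ * ‖B - G‖ := by
      rw [hfactor]; exact ContinuousLinearMap.opNorm_comp_le _ _
    calc singularValue (A ∘L B) (m + n) ≤ ‖A ∘L B - C‖ :=
          singularValue_le _ _ _ hCfin hCrank
      _ ≤ ‖A - F‖ * ‖B - G‖ := hnorm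
      _ ≤ (a + ε) * (b + ε) := by
          apply mul_le_mul (le_of_lt hxlt) (le_of_lt hylt) (norm_nonneg _)
          linarith
  -- take the limit ε → 0⁺
  have hlim : Filter.Tendsto (fun ε : ℝ => (a + ε) * (b + ε)) (nhdsWithin 0 (Set.Ioi 0))
      (nhds (a * b)) := by
    have : Filter.Tendsto (fun ε : ℝ => (a + ε) * (b + ε)) (nhds 0) (nhds ((a + 0) * (b + 0))) := by
      apply Filter.Tendsto.mul <;> exact (tendsto_const_nhds.add Filter.tendsto_id)
    simpa using this.mono_left nhdsWithin_le_nhds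
  refine ge_of_tendsto hlim ?_
  filter_upwards [self_mem_nhdsWithin] with ε hε
  exact key ε hε

end Aux

set_option maxHeartbeats 1000000 in
/-- Schatten multiplication (Hölder) property: `S_p ∘ S_q ⊆ S_r` when `1/r = 1/p + 1/q`. -/
theorem schatten_mul {H : Type*} [NormedAddCommGroup H] [InnerProductSpace ℂ H]
    [CompleteSpace H] [TopologicalSpace.SeparableSpace H]
    (A B : H →L[ℂ] H) (p q r : ℝ) (hp : 0 < p) (hq : 0 < q) (hr : 0 < r)
    (hrel : 1 / r = 1 / p + 1 / q)
    (hA : MemSchatten p A) (hB : MemSchatten q B) :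
    MemSchatten r (A ∘L B) := by
  rw [MemSchatten] at hA hB ⊢
  set a := singularValue A with haDef
  set b := singularValue B with hbDef
  set s := singularValue (A ∘L B) with hsDef
  have ha0 : ∀ k, 0 ≤ a k := fun k => singularValue_nonneg A k
  have hb0 : ∀ k, 0 ≤ b k := fun k => singularValue_nonneg B k
  have hs0 : ∀ k, 0 ≤ s k := fun k => singularValue_nonneg (A ∘L B) k
  -- weights for Young's inequality
  have hw : r / p + r / q = 1 := by
    have h1 : r / p + r / q = r * (1 / p + 1 / q) := by ring
    rw [h1, ← hrel]
    field_simp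
  -- the dominating summable sequence
  have hc : Summable fun k => (a k * b k) ^ r := by
    have hbound : ∀ k, (a k * b k) ^ r ≤ (r / p) * (a k) ^ p + (r / q) * (b k) ^ q := by
      intro k
      have h1 : (a k * b k) ^ r = ((a k) ^ p) ^ (r / p) * ((b k) ^ q) ^ (r / q) := by
        rw [Real.mul_rpow (ha0 k) (hb0 k)]
        rw [← Real.rpow_mul (ha0 k), ← Real.rpow_mul (hb0 k)]
        rw [mul_div_cancel₀ _ (ne_of_gt hp), mul_div_cancel₀ _ (ne_of_gt hq)]
      rw [h1]
      exact Real.geom_mean_le_arith_mean2_weighted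
        (by positivity) (by positivity) (Real.rpow_nonneg (ha0 k) p)
        (Real.rpow_nonneg (hb0 k) q) hw
    refine Summable.of_nonneg_of_le (fun k => Real.rpow_nonneg (mul_nonneg (ha0 k) (hb0 k)) r)
      hbound ?_
    exact ((hA.mul_left (r / p)).add (hB.mul_left (r / q)))
  -- even/odd splitting
  have heven : Summable fun k => s (2 * k) ^ r := by
    refine Summable.of_nonneg_of_le (fun k => Real.rpow_nonneg (hs0 _) r) (fun k => ?_) hc
    refine Real.rpow_le_rpow (hs0 _) ?_ (le_of_lt hr)
    have := singularValue_comp_le A B k k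
    simpa [two_mul] using this
  have hodd : Summable fun k => s (2 * k + 1) ^ r := by
    refine Summable.of_nonneg_of_le (fun k => Real.rpow_nonneg (hs0 _) r) (fun k => ?_) hc
    refine Real.rpow_le_rpow (hs0 _) ?_ (le_of_lt hr)
    have h1 : s (2 * k + 1) ≤ s (2 * k) :=
      singularValue_antitone (A ∘L B) (Nat.le_succ _)
    have h2 := singularValue_comp_le A B k k
    calc s (2 * k + 1) ≤ s (2 * k) := h1
      _ ≤ a k * b k := by simpa [two_mul] using h2
  exact (heven.hasSum.even_add_odd hodd.hasSum).summable
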